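/- Let p2, p1, p0, r be positive real numbers with p1*p2 > p0 + r. Then there exists τ̄ > 0 such that for every τ ∈ [0, τ̄], every complex number λ satisfying λ³ + p2*λ² + p1*λ + p0 + r*e^{−λτ} = 0 has negative real part. -/

import Mathlib

lemma RH (p2 p1 q : ℝ) (hp2 : 0 < p2) (hp1 : 0 < p1) (hq : 0 < q) (h : q < p1 * p2) :
    ∀ z : ℂ, z ^ 3 + p2 * z ^ 2 + p1 * z + q = 0 → z.re < 0 := by
  rintro ⟨x, y⟩ hz
  by_contra hx
  push_neg at hx
  simp only [Complex.ext_iff, Complex.add_re, Complex.add_im, Complex.mul_re, Complex.mul_im,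
    Complex.ofReal_re, Complex.ofReal_im, pow_succ, pow_zero, one_mul, Complex.one_re,
    Complex.one_im, Complex.zero_re, Complex.zero_im] at hz
  obtain ⟨hre, him⟩ := hz
  simp only at hx
  ring_nf at hre him
  rcases eq_or_ne y 0 with hy | hy
  · subst hy
    nlinarith [mul_nonneg hx hp1.le, mul_nonneg (mul_nonneg hx hx) hp2.le, pow_nonneg hx 3]
  · have hy2 : y ^ 2 = 3 * x ^ 2 + 2 * p2 * x + p1 := by
      have h2 : y * (y ^ 2) = y * (3 * x ^ 2 + 2 * p2 * x + p1) := by ring_nf; nlinarith [him]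
      exact mul_left_cancel₀ hy h2
    rw [hy2] at hre
    nlinarith [pow_nonneg hx 3, mul_nonneg hx hp1.le, mul_nonneg (mul_nonneg hx hx) hp2.le,
      mul_nonneg hx (mul_pos hp2 hp2).le]

/-- Stability persists for all sufficiently small delays. -/
theorem stmt_4 (p2 p1 p0 r : ℝ) (hp2 : 0 < p2) (hp1 : 0 < p1) (hp0 : 0 < p0)
    (hr : 0 < r) (h : p1 * p2 > p0 + r) :
    ∃ τbar : ℝ, 0 < τbar ∧ ∀ τ : ℝ, τ ∈ Set.Icc (0 : ℝ) τbar →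
      ∀ z : ℂ, z ^ 3 + p2 * z ^ 2 + p1 * z + p0 + r * Complex.exp (-z * τ) = 0 →
        z.re < 0 := by
  have hq : 0 < p0 + r := by linarith
  have hRH := RH p2 p1 (p0 + r) hp2 hp1 hq h
  set M : ℝ := 1 + p2 + p1 + p0 + r with hM
  have hM1 : 1 < M := by simp only [hM]; linarith
  have hM0 : 0 < M := by linarith
  -- the compact set
  set P : ℂ → ℂ := fun z => z ^ 3 + p2 * z ^ 2 + p1 * z + (p0 + r) with hP
  set K : Set ℂ := Metric.closedBall (0 : ℂ) M ∩ {z : ℂ | 0 ≤ z.re} with hK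
  have hKc : IsCompact K := (isCompact_closedBall (0 : ℂ) M).inter_right
    (isClosed_le continuous_const Complex.continuous_re)
  have hKne : K.Nonempty := ⟨0, by simp [hK, hM0.le]⟩
  have hPc : ContinuousOn (fun z => ‖P z‖) K := by
    apply Continuous.continuousOn
    exact continuous_norm.comp (by continuity)
  obtain ⟨z0, hz0K, hz0min⟩ := hKc.exists_isMinOn hKne hPc
  set δ : ℝ := ‖P z0‖ with hδ
  have hδ0 : 0 < δ := by
    rw [hδ]
    rcases eq_or_ne (P z0) 0 with h0 | h0
    · exfalso
      have := hRH z0 (by rw [hP] at h0; push_cast at h0 ⊢; linear_combination h0)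
      exact absurd hz0K.2 (not_le.mpr this)
    · exact (norm_pos_iff.mpr h0)
  refine ⟨min (1 / M) (δ / (4 * r * M)), lt_min (by positivity) (by positivity), ?_⟩
  rintro τ ⟨hτ0, hτle⟩ z hzeq
  by_contra hzre
  push_neg at hzre
  have hτM : τ * M ≤ 1 := by
    have := le_trans hτle (min_le_left _ _)
    calc τ * M ≤ (1 / M) * M := by nlinarith
    _ = 1 := by field_simp
  have hτδ : τ * (4 * r * M) ≤ δ := by
    have := le_trans hτle (min_le_right _ _)
    calc τ * (4 * r * M) ≤ (δ / (4 * r * M)) * (4 * r * M) :=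
          mul_le_mul_of_nonneg_right this (by positivity)
    _ = δ := by field_simp
  -- |exp(-zτ)| ≤ 1
  have hexp1 : ‖Complex.exp (-z * τ)‖ ≤ 1 := by
    rw [Complex.norm_exp, Real.exp_le_one_iff]
    simp only [Complex.neg_re, Complex.mul_re, Complex.ofReal_re, Complex.ofReal_im,
      mul_zero, sub_zero]
    nlinarith
  -- bound on |z|
  have hzM : ‖z‖ ≤ M := by
    by_contra hA
    push_neg at hA
    set A : ℝ := ‖z‖ with hAdef
    have hA1 : 1 < A := lt_trans hM1 hA
    have hcube : A ^ 3 ≤ p2 * A ^ 2 + p1 * A + p0 + r := by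
      have hz3 : z ^ 3 = -((p2 : ℂ) * z ^ 2 + p1 * z + p0 + r * Complex.exp (-z * τ)) := by
        linear_combination hzeq
      have := congrArg (norm : ℂ → ℝ) hz3
      rw [norm_neg] at this
      calc A ^ 3 = ‖z ^ 3‖ := by rw [norm_pow]
      _ = ‖(p2 : ℂ) * z ^ 2 + p1 * z + p0 + r * Complex.exp (-z * τ)‖ := this
      _ ≤ ‖(p2 : ℂ) * z ^ 2‖ + ‖(p1 : ℂ) * z‖ + ‖(p0 : ℂ)‖
          + ‖(r : ℂ) * Complex.exp (-z * τ)‖ := by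
        calc ‖(p2 : ℂ) * z ^ 2 + p1 * z + p0 + r * Complex.exp (-z * τ)‖
            ≤ ‖(p2 : ℂ) * z ^ 2 + p1 * z + p0‖
              + ‖(r : ℂ) * Complex.exp (-z * τ)‖ := norm_add_le _ _
        _ ≤ ‖(p2 : ℂ) * z ^ 2 + p1 * z‖ + ‖(p0 : ℂ)‖
              + ‖(r : ℂ) * Complex.exp (-z * τ)‖ := by
            gcongr; exact norm_add_le _ _
        _ ≤ _ := by gcongr; exact norm_add_le _ _
      _ ≤ p2 * A ^ 2 + p1 * A + p0 + r := by
        simp only [norm_mul, norm_pow, Complex.norm_real, Real.norm_eq_abs, abs_of_pos hp2, abs_of_pos hp1,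
          abs_of_pos hp0, abs_of_pos hr]
        gcongr
        · calc r * ‖Complex.exp (-z * τ)‖ ≤ r * 1 := by gcongr
          _ = r := mul_one r
    nlinarith [sq_nonneg A, mul_pos (lt_trans one_pos hA1) (lt_trans one_pos hA1)]
  -- z ∈ K, so δ ≤ |P z|
  have hzK : z ∈ K := ⟨by simpa [Metric.mem_closedBall, Complex.dist_eq] using hzM, hzre⟩
  have hmin : δ ≤ ‖P z‖ := hz0min hzK
  -- P z = r (1 - exp(-zτ))
  have hPz : P z = (r : ℂ) * (1 - Complex.exp (-z * τ)) := by
    rw [hP]; push_cast; linear_combination hzeq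
  have habsw : ‖-z * (τ : ℂ)‖ ≤ 1 := by
    rw [norm_mul, norm_neg, Complex.norm_real, Real.norm_eq_abs, abs_of_nonneg hτ0]
    calc ‖z‖ * τ ≤ M * τ := by gcongr
    _ = τ * M := mul_comm _ _
    _ ≤ 1 := hτM
  have hbound : ‖P z‖ ≤ 2 * r * (‖z‖ * τ) := by
    rw [hPz, norm_mul, Complex.norm_real, Real.norm_eq_abs, abs_of_pos hr]
    have h1 : ‖1 - Complex.exp (-z * τ)‖ =
        ‖Complex.exp (-z * τ) - 1‖ := by rw [← norm_neg]; ring_nf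
    rw [h1]
    have := Complex.norm_exp_sub_one_le habsw
    rw [norm_mul, norm_neg, Complex.norm_real, Real.norm_eq_abs, abs_of_nonneg hτ0] at this
    calc r * ‖Complex.exp (-z * τ) - 1‖ ≤ r * (2 * (‖z‖ * τ)) := by gcongr
    _ = 2 * r * (‖z‖ * τ) := by ring
  have : δ ≤ 2 * r * (M * τ) := by
    calc δ ≤ ‖P z‖ := hmin
    _ ≤ 2 * r * (‖z‖ * τ) := hbound
    _ ≤ 2 * r * (M * τ) := by gcongr
  nlinarith [hτδ]
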